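/- Let Z = ℤ/(p^m) for a prime p and m ≥ 1. If D(z) = diag(p^{k_1},…, p^{k_{n-1}}, z p^{k_n}) with 0 ≤ k_1 ≤ … ≤ k_n < m and z ∈ Z^×, and if there exist g, h ∈ SL_n(Z) with g·D(1)·h = D(z), then D(z) = D(1), i.e., z·p^{k_n} = p^{k_n} in Z. -/

import Mathlib

/-- If two integer matrices agree entrywise modulo `d`, their determinants
agree modulo `d`. -/
lemma det_sub_dvd_of_entries_sub_dvd {s : Type*} [DecidableEq s] [Fintype s]
    (d : ℕ) (X Y : Matrix s s ℤ) (hxy : ∀ i j, (d : ℤ) ∣ Y i j - X i j) :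
    (d : ℤ) ∣ Y.det - X.det := by
  have hmap : (Int.castRingHom (ZMod d)).mapMatrix X
      = (Int.castRingHom (ZMod d)).mapMatrix Y := by
    ext i j
    have h0 : ((Y i j - X i j : ℤ) : ZMod d) = 0 := by
      rw [ZMod.intCast_zmod_eq_zero_iff_dvd]
      exact_mod_cast hxy i j
    rw [Int.cast_sub, sub_eq_zero] at h0
    simpa [RingHom.mapMatrix_apply] using h0.symm
  rw [← ZMod.intCast_zmod_eq_zero_iff_dvd, Int.cast_sub, sub_eq_zero]
  calc ((Y.det : ℤ) : ZMod d)
      = ((Int.castRingHom (ZMod d)).mapMatrix Y).det := by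
        rw [← RingHom.map_det]; rfl
    _ = ((Int.castRingHom (ZMod d)).mapMatrix X).det := by rw [hmap]
    _ = ((X.det : ℤ) : ZMod d) := by rw [← RingHom.map_det]; rfl

/-- Over `Z = ℤ/p^mℤ` (`p` prime, `m ≥ 1`), if
`D(z) = diag(p^{k_1}, …, p^{k_{n-1}}, z·p^{k_n})` with `0 ≤ k_1 ≤ ⋯ ≤ k_n < m` and
`z ∈ Zˣ`, and `g·D(1)·h = D(z)` for some `g, h ∈ SL_n(Z)`, then `D(z) = D(1)`,
i.e. `z·p^{k_n} = p^{k_n}` in `Z`. -/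
theorem sl_smith_uniqueness_prime_power
    (p : ℕ) (hp : p.Prime) (m : ℕ) (hm : 1 ≤ m) (n : ℕ)
    (k : Fin (n + 1) → ℕ) (hmono : Monotone k) (hk : ∀ i, k i < m)
    (z : (ZMod (p ^ m))ˣ)
    (D : (ZMod (p ^ m))ˣ → Matrix (Fin (n + 1)) (Fin (n + 1)) (ZMod (p ^ m)))
    (hD : ∀ w, D w = Matrix.diagonal
      (fun i => (if i = Fin.last n then (w : ZMod (p ^ m)) else 1)
        * (p : ZMod (p ^ m)) ^ (k i)))
    (g h : Matrix.SpecialLinearGroup (Fin (n + 1)) (ZMod (p ^ m)))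
    (hgh : (↑g : Matrix (Fin (n + 1)) (Fin (n + 1)) (ZMod (p ^ m))) * D 1 * (↑h : Matrix (Fin (n + 1)) (Fin (n + 1)) (ZMod (p ^ m))) = D z) :
    (z : ZMod (p ^ m)) * (p : ZMod (p ^ m)) ^ (k (Fin.last n))
      = (p : ZMod (p ^ m)) ^ (k (Fin.last n)) := by
  haveI : NeZero (p ^ m) := NeZero.of_pos (pow_pos hp.pos m)
  set t := k (Fin.last n) with ht
  set u : Fin (n + 1) → ZMod (p ^ m) :=
    fun i => if i = Fin.last n then (z : ZMod (p ^ m)) else 1 with hu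
  -- `D 1` is the plain diagonal of `p`-powers
  have hD1 : D 1 = Matrix.diagonal (fun i => (p : ZMod (p ^ m)) ^ (k i)) := by
    have hfun : (fun i => (if i = Fin.last n then ((1 : (ZMod (p ^ m))ˣ) : ZMod (p ^ m)) else 1)
        * (p : ZMod (p ^ m)) ^ (k i)) = fun i => (p : ZMod (p ^ m)) ^ (k i) := by
      funext i; split <;> simp
    rw [hD, hfun]
  -- `D z = D 1 * diagonal u`
  have hDz : D z = D 1 * Matrix.diagonal u := by
    rw [hD, hD1, Matrix.diagonal_mul_diagonal]
    congr 1
    funext i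
    by_cases hi : i = Fin.last n <;> simp [hu, hi, mul_comm]
  set hinvM : Matrix (Fin (n + 1)) (Fin (n + 1)) (ZMod (p ^ m)) :=
    ((h⁻¹ : Matrix.SpecialLinearGroup (Fin (n + 1)) (ZMod (p ^ m))) :
      Matrix (Fin (n + 1)) (Fin (n + 1)) (ZMod (p ^ m))) with hhinvM
  -- `b := U * h⁻¹` satisfies `g * D1 = D1 * b` and `det b = z`
  set b : Matrix (Fin (n + 1)) (Fin (n + 1)) (ZMod (p ^ m)) :=
    Matrix.diagonal u * hinvM with hb
  have hhinv : (↑h : Matrix (Fin (n + 1)) (Fin (n + 1)) (ZMod (p ^ m))) * hinvM = 1 := by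
    rw [hhinvM, ← Matrix.SpecialLinearGroup.coe_mul, mul_inv_cancel,
      Matrix.SpecialLinearGroup.coe_one]
  have hgb : (↑g : Matrix (Fin (n + 1)) (Fin (n + 1)) (ZMod (p ^ m))) * D 1 = D 1 * b := by
    rw [hb, ← mul_assoc, ← hDz, ← hgh,
      mul_assoc ((↑g : Matrix (Fin (n + 1)) (Fin (n + 1)) (ZMod (p ^ m))) * D 1)
        (↑h : Matrix (Fin (n + 1)) (Fin (n + 1)) (ZMod (p ^ m))) hinvM,
      hhinv, mul_one]
  have hdetb : b.det = (z : ZMod (p ^ m)) := by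
    rw [hb, Matrix.det_mul, hhinvM, Matrix.SpecialLinearGroup.det_coe, mul_one,
      Matrix.det_diagonal, hu]
    simp
  -- the entrywise relation
  have hentry : ∀ i j, (↑g : Matrix (Fin (n + 1)) (Fin (n + 1)) (ZMod (p ^ m))) i j
      * (p : ZMod (p ^ m)) ^ (k j) = (p : ZMod (p ^ m)) ^ (k i) * b i j := by
    intro i j
    have := congrFun (congrFun hgb i) j
    rwa [hD1, Matrix.mul_diagonal, Matrix.diagonal_mul] at this
  -- integer lifts
  set A : Matrix (Fin (n + 1)) (Fin (n + 1)) ℤ :=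
    Matrix.of fun i j =>
      (((↑g : Matrix (Fin (n + 1)) (Fin (n + 1)) (ZMod (p ^ m))) i j).val : ℤ) with hA
  set B : Matrix (Fin (n + 1)) (Fin (n + 1)) ℤ :=
    Matrix.of fun i j => ((b i j).val : ℤ) with hB
  have hcastA : ∀ i j, ((A i j : ℤ) : ZMod (p ^ m))
      = (↑g : Matrix (Fin (n + 1)) (Fin (n + 1)) (ZMod (p ^ m))) i j := by
    intro i j
    simp only [hA, Matrix.of_apply, ZMod.natCast_val, ZMod.intCast_zmod_cast]
  have hcastB : ∀ i j, ((B i j : ℤ) : ZMod (p ^ m)) = b i j := by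
    intro i j
    simp only [hB, Matrix.of_apply, ZMod.natCast_val, ZMod.intCast_zmod_cast]
  have hdvd : ∀ i j, ((p : ℤ) ^ m) ∣
      ((p : ℤ) ^ (k i) * B i j - (p : ℤ) ^ (k j) * A i j) := by
    intro i j
    have hcast : (((p : ℤ) ^ (k i) * B i j - (p : ℤ) ^ (k j) * A i j : ℤ)
        : ZMod (p ^ m)) = 0 := by
      push_cast
      rw [hcastA, hcastB, sub_eq_zero, ← hentry i j]
      ring
    have := (ZMod.intCast_zmod_eq_zero_iff_dvd _ (p ^ m)).mp hcast
    exact_mod_cast this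
  -- the correction matrix
  set C : Fin (n + 1) → Fin (n + 1) → ℤ :=
    fun i j => ((p : ℤ) ^ (k i) * B i j - (p : ℤ) ^ (k j) * A i j) / (p : ℤ) ^ m with hC
  have hCkey : ∀ i j, (p : ℤ) ^ m * C i j
      = (p : ℤ) ^ (k i) * B i j - (p : ℤ) ^ (k j) * A i j := by
    intro i j; exact Int.mul_ediv_cancel' (hdvd i j)
  set M : Matrix (Fin (n + 1)) (Fin (n + 1)) ℤ :=
    Matrix.of fun i j => (p : ℤ) ^ (m - k j) * C i j with hM
  set P : Matrix (Fin (n + 1)) (Fin (n + 1)) ℤ :=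
    Matrix.diagonal (fun i => (p : ℤ) ^ (k i)) with hP
  -- the key matrix identity over ℤ
  have hkey : (A + M) * P = P * B := by
    ext i j
    simp only [hP, Matrix.mul_diagonal, Matrix.diagonal_mul, Matrix.add_apply, hM,
      Matrix.of_apply]
    have hpow : (p : ℤ) ^ (m - k j) * (p : ℤ) ^ (k j) = (p : ℤ) ^ m := by
      rw [← pow_add, Nat.sub_add_cancel (hk j).le]
    calc (A i j + (p : ℤ) ^ (m - k j) * C i j) * (p : ℤ) ^ (k j)
        = A i j * (p : ℤ) ^ (k j)
          + ((p : ℤ) ^ (m - k j) * (p : ℤ) ^ (k j)) * C i j := by ring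
      _ = A i j * (p : ℤ) ^ (k j) + (p : ℤ) ^ m * C i j := by rw [hpow]
      _ = (p : ℤ) ^ (k i) * B i j := by rw [hCkey i j]; ring
  -- take determinants and cancel the (nonzero) diagonal determinant
  have hPdet : P.det ≠ 0 := by
    rw [hP, Matrix.det_diagonal]
    exact Finset.prod_ne_zero_iff.mpr fun i _ =>
      pow_ne_zero _ (by exact_mod_cast hp.ne_zero)
  have hdetAM : (A + M).det = B.det := by
    have hdets := congrArg Matrix.det hkey
    rw [Matrix.det_mul, Matrix.det_mul] at hdets
    have h2 : (A + M).det * P.det = B.det * P.det := by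
      rw [hdets]; ring
    exact mul_right_cancel₀ hPdet h2
  -- determinants agree modulo p^(m - t)
  have hdivM : ∀ i j, ((p ^ (m - t) : ℕ) : ℤ) ∣ (A + M) i j - A i j := by
    intro i j
    rw [Matrix.add_apply, add_sub_cancel_left, hM, Matrix.of_apply]
    push_cast
    exact dvd_mul_of_dvd_left
      (pow_dvd_pow _ (Nat.sub_le_sub_left (hmono (Fin.le_last j)) m)) _
  have hdetdvd : ((p ^ (m - t) : ℕ) : ℤ) ∣ B.det - A.det := by
    rw [← hdetAM]
    exact det_sub_dvd_of_entries_sub_dvd _ A (A + M) hdivM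
  obtain ⟨c, hc⟩ := hdetdvd
  -- cast the congruence back to `ZMod (p ^ m)`
  have hdetAcast : ((A.det : ℤ) : ZMod (p ^ m)) = 1 := by
    have hmapA : ((Int.castRingHom (ZMod (p ^ m))).mapMatrix A).det
        = (↑g : Matrix (Fin (n + 1)) (Fin (n + 1)) (ZMod (p ^ m))).det := by
      congr 1
      ext i j
      simpa [RingHom.mapMatrix_apply] using hcastA i j
    rw [show ((A.det : ℤ) : ZMod (p ^ m)) = (Int.castRingHom (ZMod (p ^ m))) A.det from rfl,
      RingHom.map_det, hmapA, Matrix.SpecialLinearGroup.det_coe]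
  have hdetBcast : ((B.det : ℤ) : ZMod (p ^ m)) = (z : ZMod (p ^ m)) := by
    have hmapB : ((Int.castRingHom (ZMod (p ^ m))).mapMatrix B).det = b.det := by
      congr 1
      ext i j
      simpa [RingHom.mapMatrix_apply] using hcastB i j
    rw [show ((B.det : ℤ) : ZMod (p ^ m)) = (Int.castRingHom (ZMod (p ^ m))) B.det from rfl,
      RingHom.map_det, hmapB, hdetb]
  have hzR : (z : ZMod (p ^ m)) - 1
      = (p : ZMod (p ^ m)) ^ (m - t) * ((c : ℤ) : ZMod (p ^ m)) := by
    have hcR := congrArg (fun x : ℤ => (x : ZMod (p ^ m))) hc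
    simp only [Int.cast_sub, Int.cast_mul] at hcR
    rw [hdetBcast, hdetAcast] at hcR; push_cast at hcR; exact hcR
  -- multiply by p^t
  have hpm : (p : ZMod (p ^ m)) ^ (m - t) * (p : ZMod (p ^ m)) ^ t = 0 := by
    rw [← pow_add, Nat.sub_add_cancel (hk (Fin.last n)).le]
    have h0 : ((p ^ m : ℕ) : ZMod (p ^ m)) = 0 := ZMod.natCast_self _
    push_cast at h0
    exact h0
  have hfin : ((z : ZMod (p ^ m)) - 1) * (p : ZMod (p ^ m)) ^ t = 0 := by
    rw [hzR]
    calc (p : ZMod (p ^ m)) ^ (m - t) * ((c : ℤ) : ZMod (p ^ m)) * (p : ZMod (p ^ m)) ^ t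
        = ((p : ZMod (p ^ m)) ^ (m - t) * (p : ZMod (p ^ m)) ^ t)
          * ((c : ℤ) : ZMod (p ^ m)) := by ring
      _ = 0 := by rw [hpm, zero_mul]
  have := sub_eq_zero.mp (by rwa [sub_mul] at hfin)
  simpa using this
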